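/- arXiv:1301.2898 — 2 statements merged into one kernel-verified Lean document; each statement's English description precedes it below -/
import Mathlib

section
/- Let φ be 𝒯-good and I, J ∈ S_φ. Then either A(φ, J) ∩ I = ∅ or J ⊆ I. -/
open MeasureTheory Set Filter
open scoped ENNReal

/-- A tree `𝒯` on a probability space `(X, μ)` in the sense of Melas:
`X ∈ 𝒯`; every `I ∈ 𝒯` is measurable with `μ(I) > 0`; each `I ∈ 𝒯` has a finite or
countable family `C(I) ⊆ 𝒯` of at least two pairwise disjoint elements with union `I`;
`𝒯` is the union of its generations `𝒯_(m)`; and `sup_{I ∈ 𝒯_(m)} μ(I) → 0`. -/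
structure DyadicTree {X : Type*} [MeasurableSpace X] (μ : Measure X) where
  mem : Set (Set X)
  univ_mem : Set.univ ∈ mem
  meas : ∀ I ∈ mem, MeasurableSet I
  measure_pos : ∀ I ∈ mem, 0 < μ I
  C : Set X → Set (Set X)
  C_subset_mem : ∀ I ∈ mem, C I ⊆ mem
  C_countable : ∀ I ∈ mem, (C I).Countable
  C_nontrivial : ∀ I ∈ mem, ∃ J ∈ C I, ∃ K ∈ C I, J ≠ K
  C_disjoint : ∀ I ∈ mem, (C I).Pairwise Disjoint
  C_union : ∀ I ∈ mem, ⋃₀ C I = I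
  gen : ℕ → Set (Set X)
  gen_zero : gen 0 = {Set.univ}
  gen_succ : ∀ m, gen (m + 1) = ⋃ I ∈ gen m, C I
  mem_eq : mem = ⋃ m, gen m
  sup_measure_tendsto : Tendsto (fun m => ⨆ I ∈ gen m, μ I) atTop (nhds 0)

variable {X : Type*} [MeasurableSpace X]

/-- The average `Av_I(φ) = (1/μ(I)) ∫_I φ dμ`. -/
noncomputable def Av (μ : Measure X) (I : Set X) (φ : X → ℝ≥0∞) : ℝ≥0∞ :=
  (∫⁻ y in I, φ y ∂μ) / μ I

/-- The dyadic-like maximal operator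
`M_𝒯 φ(x) = sup { (1/μ(I)) ∫_I φ dμ : x ∈ I ∈ 𝒯 }`. -/
noncomputable def maxOp {μ : Measure X} (T : DyadicTree μ) (φ : X → ℝ≥0∞) (x : X) : ℝ≥0∞ :=
  ⨆ I ∈ T.mem, ⨆ _ : x ∈ I, Av μ I φ

variable {μ : Measure X}

/-- The exceptional set `𝒜_φ = {x : M_𝒯φ(x) > Av_I(φ) for all I ∈ 𝒯 with x ∈ I}`. -/
def badSet (T : DyadicTree μ) (φ : X → ℝ≥0∞) : Set X :=
  {x | ∀ I ∈ T.mem, x ∈ I → Av μ I φ < maxOp T φ x}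

/-- `φ` is `𝒯`-good if the set `𝒜_φ` has `μ`-measure zero. -/
def TGood (T : DyadicTree μ) (φ : X → ℝ≥0∞) : Prop :=
  μ (badSet T φ) = 0

/-- The set `A(φ, I) = {x ∈ X ∖ 𝒜_φ : I_φ(x) = I}`, where `I_φ(x)` is the largest
`I ∈ 𝒯` with `x ∈ I` and `M_𝒯φ(x) = Av_I(φ)`. -/
def ASet (T : DyadicTree μ) (φ : X → ℝ≥0∞) (I : Set X) : Set X :=
  {x | x ∉ badSet T φ ∧ x ∈ I ∧ maxOp T φ x = Av μ I φ ∧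
    ∀ J ∈ T.mem, x ∈ J → maxOp T φ x = Av μ J φ → J ⊆ I}

/-- The subtree `S_φ = {I ∈ 𝒯 : μ(A(φ,I)) > 0} ∪ {X}`. -/
def Sphi (T : DyadicTree μ) (φ : X → ℝ≥0∞) : Set (Set X) :=
  {I ∈ T.mem | 0 < μ (ASet T φ I)} ∪ {Set.univ}


lemma gen_mem_tree {X : Type*} [MeasurableSpace X] {μ : Measure X} (T : DyadicTree μ)
    {m : ℕ} {I : Set X} (hI : I ∈ T.gen m) : I ∈ T.mem := by
  rw [T.mem_eq]; exact Set.mem_iUnion.mpr ⟨m, hI⟩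

lemma gen_eq_of_inter {X : Type*} [MeasurableSpace X] {μ : Measure X} (T : DyadicTree μ) :
    ∀ m, ∀ I ∈ T.gen m, ∀ J ∈ T.gen m, (I ∩ J).Nonempty → I = J := by
  intro m
  induction m with
  | zero =>
    intro I hI J hJ _
    rw [T.gen_zero] at hI hJ
    simp only [Set.mem_singleton_iff] at hI hJ
    rw [hI, hJ]
  | succ m ih =>
    intro I hI J hJ hne
    rw [T.gen_succ] at hI hJ
    simp only [Set.mem_iUnion] at hI hJ
    obtain ⟨I', hI', hIC⟩ := hI
    obtain ⟨J', hJ', hJC⟩ := hJ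
    have hI'mem : I' ∈ T.mem := gen_mem_tree T hI'
    have hJ'mem : J' ∈ T.mem := gen_mem_tree T hJ'
    have hIsub : I ⊆ I' := (T.C_union I' hI'mem) ▸ Set.subset_sUnion_of_mem hIC
    have hJsub : J ⊆ J' := (T.C_union J' hJ'mem) ▸ Set.subset_sUnion_of_mem hJC
    obtain ⟨x, hxI, hxJ⟩ := hne
    have hII : I' = J' := ih I' hI' J' hJ' ⟨x, hIsub hxI, hJsub hxJ⟩
    subst hII
    by_contra hne'
    exact Set.disjoint_left.mp (T.C_disjoint I' hI'mem hIC hJC hne') hxI hxJ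

lemma gen_subset_of_inter {X : Type*} [MeasurableSpace X] {μ : Measure X} (T : DyadicTree μ) :
    ∀ k m, ∀ I ∈ T.gen m, ∀ J ∈ T.gen (m + k), (I ∩ J).Nonempty → J ⊆ I := by
  intro k
  induction k with
  | zero =>
    intro m I hI J hJ hne
    exact (gen_eq_of_inter T m I hI J hJ hne).ge
  | succ k ih =>
    intro m I hI J hJ hne
    rw [show m + (k + 1) = (m + k) + 1 from rfl, T.gen_succ] at hJ
    simp only [Set.mem_iUnion] at hJ
    obtain ⟨J', hJ', hJC⟩ := hJ
    have hJ'mem : J' ∈ T.mem := gen_mem_tree T hJ'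
    have hJsub : J ⊆ J' := (T.C_union J' hJ'mem) ▸ Set.subset_sUnion_of_mem hJC
    obtain ⟨x, hxI, hxJ⟩ := hne
    exact hJsub.trans (ih m I hI J' hJ' ⟨x, hxI, hJsub hxJ⟩)

lemma tree_nested {X : Type*} [MeasurableSpace X] {μ : Measure X} (T : DyadicTree μ)
    {I J : Set X} (hI : I ∈ T.mem) (hJ : J ∈ T.mem) (hne : (I ∩ J).Nonempty) :
    I ⊆ J ∨ J ⊆ I := by
  rw [T.mem_eq] at hI hJ
  obtain ⟨m, hI⟩ := Set.mem_iUnion.mp hI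
  obtain ⟨n, hJ⟩ := Set.mem_iUnion.mp hJ
  rcases le_total m n with h | h
  · obtain ⟨k, rfl⟩ := Nat.exists_eq_add_of_le h
    exact Or.inr (gen_subset_of_inter T k m I hI J hJ hne)
  · obtain ⟨k, rfl⟩ := Nat.exists_eq_add_of_le h
    exact Or.inl (gen_subset_of_inter T k n J hJ I hI ⟨hne.choose, hne.choose_spec.2, hne.choose_spec.1⟩)

lemma Av_le_maxOp {X : Type*} [MeasurableSpace X] {μ : Measure X} (T : DyadicTree μ)
    (φ : X → ℝ≥0∞) {x : X} {I : Set X} (hI : I ∈ T.mem) (hx : x ∈ I) :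
    Av μ I φ ≤ maxOp T φ x :=
  le_iSup₂_of_le I hI (le_iSup_of_le hx le_rfl)

/-- Lemma 3.2 i) -/
theorem ASet_inter_empty_or_subset (μ : Measure X) [IsProbabilityMeasure μ] [NullSingletonClass μ]
    (T : DyadicTree μ) (φ : X → ℝ≥0∞) (hφ : Measurable φ)
    (hint : ∫⁻ y, φ y ∂μ ≠ ∞) (hgood : TGood T φ)
    (I J : Set X) (hI : I ∈ Sphi T φ) (hJ : J ∈ Sphi T φ) :
    ASet T φ J ∩ I = ∅ ∨ J ⊆ I := by
  rcases hI with ⟨hImem, hIpos⟩ | hIuniv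
  · have hJmem : J ∈ T.mem := by
      rcases hJ with ⟨h, _⟩ | h
      · exact h
      · rw [Set.mem_singleton_iff] at h; exact h ▸ T.univ_mem
    by_cases hne : (ASet T φ J ∩ I).Nonempty
    · right
      obtain ⟨x, hxA, hxI⟩ := hne
      obtain ⟨hxbad, hxJ, hxmax, hxmaxl⟩ := hxA
      rcases tree_nested T hImem hJmem ⟨x, hxI, hxJ⟩ with hIJ | hJI
      · -- I ⊆ J strictly or not; pick y ∈ ASet I
        have hAvIJ : Av μ I φ ≤ Av μ J φ := hxmax ▸ Av_le_maxOp T φ hImem hxI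
        obtain ⟨y, hy⟩ := MeasureTheory.nonempty_of_measure_ne_zero hIpos.ne'
        obtain ⟨hybad, hyI, hymax, hymaxl⟩ := hy
        have hyJ : y ∈ J := hIJ hyI
        have h1 : Av μ J φ ≤ maxOp T φ y := Av_le_maxOp T φ hJmem hyJ
        have h2 : maxOp T φ y = Av μ J φ :=
          le_antisymm (hymax.le.trans hAvIJ) h1
        exact hymaxl J hJmem hyJ h2
      · exact hJI
    · left; exact Set.not_nonempty_iff_eq_empty.mp hne
  · rw [Set.mem_singleton_iff] at hIuniv
    exact Or.inr (hIuniv ▸ Set.subset_univ J)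
end

section
/- Let φ be 𝒯-good. Then for every I ∈ S_φ, I coincides up to a μ-null set with the union ⋃{A(φ, J) : J ∈ S_φ, J ⊆ I}; in particular μ(I) = Σ_{J ∈ S_φ, J ⊆ I} μ(A(φ,J)). -/
open MeasureTheory Set Filter
open scoped ENNReal

variable {X : Type*} [MeasurableSpace X]

variable {μ : Measure X}

section Aux

variable {μ : Measure X} (T : DyadicTree μ) (φ : X → ℝ≥0∞)

lemma gen_subset_mem (m : ℕ) : T.gen m ⊆ T.mem := by
  rw [T.mem_eq]; exact Set.subset_iUnion T.gen m

lemma gen_countable : ∀ m, (T.gen m).Countable := by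
  intro m
  induction m with
  | zero => rw [T.gen_zero]; exact Set.countable_singleton _
  | succ m ih =>
    rw [T.gen_succ]
    exact ih.biUnion fun I hI => T.C_countable I (gen_subset_mem T m hI)

lemma mem_countable : T.mem.Countable := by
  rw [T.mem_eq]; exact Set.countable_iUnion (gen_countable T)

lemma child_subset {P J : Set X} (hP : P ∈ T.mem) (hJ : J ∈ T.C P) : J ⊆ P := by
  rw [← T.C_union P hP]; exact Set.subset_sUnion_of_mem hJ

lemma gen_eq_of_mem : ∀ m, ∀ I ∈ T.gen m, ∀ J ∈ T.gen m, ∀ x : X, x ∈ I → x ∈ J → I = J := by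
  intro m
  induction m with
  | zero =>
    intro I hI J hJ x _ _
    rw [T.gen_zero] at hI hJ
    rw [Set.mem_singleton_iff.mp hI, Set.mem_singleton_iff.mp hJ]
  | succ m ih =>
    intro I hI J hJ x hxI hxJ
    rw [T.gen_succ] at hI hJ
    simp only [Set.mem_iUnion] at hI hJ
    obtain ⟨P, hP, hIP⟩ := hI
    obtain ⟨Q, hQ, hJQ⟩ := hJ
    have hPm : P ∈ T.mem := gen_subset_mem T m hP
    have hQm : Q ∈ T.mem := gen_subset_mem T m hQ
    have hPQ : P = Q := ih P hP Q hQ x (child_subset T hPm hIP hxI) (child_subset T hQm hJQ hxJ)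
    subst hPQ
    by_contra hne
    exact Set.disjoint_left.mp (T.C_disjoint P hPm hIP hJQ hne) hxI hxJ

lemma gen_exists (x : X) : ∀ m, ∃ I ∈ T.gen m, x ∈ I := by
  intro m
  induction m with
  | zero => exact ⟨Set.univ, by rw [T.gen_zero]; exact rfl, Set.mem_univ x⟩
  | succ m ih =>
    obtain ⟨I, hI, hxI⟩ := ih
    have hIm : I ∈ T.mem := gen_subset_mem T m hI
    have : x ∈ ⋃₀ T.C I := by rw [T.C_union I hIm]; exact hxI
    obtain ⟨J, hJ, hxJ⟩ := this
    refine ⟨J, ?_, hxJ⟩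
    rw [T.gen_succ]
    exact Set.mem_iUnion₂.mpr ⟨I, hI, hJ⟩

lemma gen_ancestor {m n : ℕ} (h : m ≤ n) : ∀ K ∈ T.gen n, ∃ J ∈ T.gen m, K ⊆ J := by
  induction n, h using Nat.le_induction with
  | base => exact fun K hK => ⟨K, hK, subset_rfl⟩
  | succ n hmn ih =>
    intro K hK
    rw [T.gen_succ] at hK
    simp only [Set.mem_iUnion] at hK
    obtain ⟨P, hP, hKP⟩ := hK
    obtain ⟨J, hJ, hPJ⟩ := ih P hP
    exact ⟨J, hJ, (child_subset T (gen_subset_mem T n hP) hKP).trans hPJ⟩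

lemma gen_nested {m n : ℕ} (h : m ≤ n) {I K : Set X} (hI : I ∈ T.gen m) (hK : K ∈ T.gen n)
    {x : X} (hxI : x ∈ I) (hxK : x ∈ K) : K ⊆ I := by
  obtain ⟨J, hJ, hKJ⟩ := gen_ancestor T h K hK
  rwa [gen_eq_of_mem T m I hI J hJ x hxI (hKJ hxK)]

lemma mem_comparable {I J : Set X} (hI : I ∈ T.mem) (hJ : J ∈ T.mem) {x : X}
    (hxI : x ∈ I) (hxJ : x ∈ J) : I ⊆ J ∨ J ⊆ I := by
  rw [T.mem_eq] at hI hJ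
  obtain ⟨m, hm⟩ := Set.mem_iUnion.mp hI
  obtain ⟨n, hn⟩ := Set.mem_iUnion.mp hJ
  rcases le_total m n with h | h
  · exact Or.inr (gen_nested T h hm hn hxI hxJ)
  · exact Or.inl (gen_nested T h hn hm hxJ hxI)

lemma le_maxOp {I : Set X} (hI : I ∈ T.mem) {x : X} (hx : x ∈ I) :
    Av μ I φ ≤ maxOp T φ x :=
  le_iSup₂_of_le I hI (le_iSup (fun _ : x ∈ I => Av μ I φ) hx)

lemma not_badSet_iff {x : X} :
    x ∉ badSet T φ ↔ ∃ I ∈ T.mem, x ∈ I ∧ maxOp T φ x = Av μ I φ := by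
  simp only [badSet, Set.mem_setOf_eq, not_forall]
  constructor
  · rintro ⟨I, hI, hxI, hlt⟩
    exact ⟨I, hI, hxI, le_antisymm (not_lt.mp hlt) (le_maxOp T φ hI hxI)⟩
  · rintro ⟨I, hI, hxI, heq⟩
    exact ⟨I, hI, hxI, by rw [heq]; exact lt_irrefl _⟩

lemma exists_ASet {x : X} (hx : x ∉ badSet T φ) : ∃ I ∈ T.mem, x ∈ ASet T φ I := by
  obtain ⟨I0, hI0, hxI0, heq0⟩ := (not_badSet_iff T φ).mp hx
  have hP : ∃ m, ∃ I ∈ T.gen m, x ∈ I ∧ maxOp T φ x = Av μ I φ := by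
    rw [T.mem_eq] at hI0
    obtain ⟨m, hm⟩ := Set.mem_iUnion.mp hI0
    exact ⟨m, I0, hm, hxI0, heq0⟩
  classical
  obtain ⟨I, hIgen, hxI, heq⟩ := Nat.find_spec hP
  have hImem : I ∈ T.mem := gen_subset_mem T _ hIgen
  refine ⟨I, hImem, hx, hxI, heq, ?_⟩
  intro J hJ hxJ heqJ
  rw [T.mem_eq] at hJ
  obtain ⟨n, hn⟩ := Set.mem_iUnion.mp hJ
  rcases le_or_gt (Nat.find hP) n with h | h
  · exact gen_nested T h hIgen hn hxI hxJ
  · exact absurd ⟨J, hn, hxJ, heqJ⟩ (Nat.find_min hP h)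

lemma ASet_subset (I : Set X) : ASet T φ I ⊆ I := fun _ h => h.2.1

lemma ASet_eq {I J : Set X} (hI : I ∈ T.mem) (hJ : J ∈ T.mem) {x : X}
    (hxI : x ∈ ASet T φ I) (hxJ : x ∈ ASet T φ J) : I = J :=
  Set.Subset.antisymm (hxJ.2.2.2 I hI hxI.2.1 hxI.2.2.1) (hxI.2.2.2 J hJ hxJ.2.1 hxJ.2.2.1)

lemma mem_of_Sphi {I : Set X} (hI : I ∈ Sphi T φ) : I ∈ T.mem := by
  rcases hI with h | h
  · exact h.1
  · rw [Set.mem_singleton_iff.mp h]; exact T.univ_mem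

/-- Key step: if `A(φ,I)` is nonempty and `x ∈ A(φ,J) ∩ I`, then `J ⊆ I`. -/
lemma ASet_subset_of_inter {I J : Set X} (hI : I ∈ T.mem) (hJ : J ∈ T.mem)
    (hne : (ASet T φ I).Nonempty) {x : X} (hxJ : x ∈ ASet T φ J) (hxI : x ∈ I) : J ⊆ I := by
  rcases mem_comparable T hI hJ hxI hxJ.2.1 with h | h
  · -- I ⊆ J; show J ⊆ I using a point of A(φ,I)
    obtain ⟨y, hy⟩ := hne
    have hyJ : y ∈ J := h hy.2.1
    have h1 : Av μ J φ ≤ Av μ I φ := hy.2.2.1 ▸ le_maxOp T φ hJ hyJ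
    have h2 : Av μ I φ ≤ Av μ J φ := hxJ.2.2.1 ▸ le_maxOp T φ hI hxI
    have heq : maxOp T φ y = Av μ J φ := hy.2.2.1.trans (le_antisymm h2 h1)
    exact hy.2.2.2 J hJ hyJ heq
  · exact h

lemma measurable_maxOp : Measurable (maxOp T φ) := by
  have hc : Countable T.mem := (mem_countable T).to_subtype
  have h1 : maxOp T φ = fun x => ⨆ I : T.mem,
      Set.indicator (I : Set X) (fun _ => Av μ (I : Set X) φ) x := by
    funext x
    rw [maxOp, iSup_subtype']
    congr 1
    funext I
    by_cases h : x ∈ (I : Set X) <;> simp [Set.indicator, h]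
  rw [h1]
  exact Measurable.iSup fun I =>
    Measurable.indicator measurable_const (T.meas I I.2)

lemma measurableSet_eq_Av (I : Set X) : MeasurableSet {x | maxOp T φ x = Av μ I φ} :=
  measurable_maxOp T φ (measurableSet_singleton (Av μ I φ))

lemma measurableSet_badSet : MeasurableSet (badSet T φ) := by
  have : badSet T φ = ⋂ I ∈ T.mem, (Iᶜ ∪ {x | Av μ I φ < maxOp T φ x}) := by
    ext x
    simp only [badSet, Set.mem_setOf_eq, Set.mem_iInter, Set.mem_union, Set.mem_compl_iff]
    constructor
    · intro h I hI
      by_cases hx : x ∈ I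
      · exact Or.inr (h I hI hx)
      · exact Or.inl hx
    · intro h I hI hx
      rcases h I hI with h' | h'
      · exact absurd hx h'
      · exact h'
  rw [this]
  exact MeasurableSet.biInter (mem_countable T) fun I hI =>
    ((T.meas I hI).compl).union (measurable_maxOp T φ measurableSet_Ioi)

lemma measurableSet_ASet {I : Set X} (hI : I ∈ T.mem) : MeasurableSet (ASet T φ I) := by
  have : ASet T φ I = (badSet T φ)ᶜ ∩ I ∩ {x | maxOp T φ x = Av μ I φ} ∩
      ⋂ J ∈ T.mem, {x | x ∈ J → maxOp T φ x = Av μ J φ → J ⊆ I} := by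
    ext x
    simp only [ASet, Set.mem_setOf_eq, Set.mem_inter_iff, Set.mem_compl_iff, Set.mem_iInter]
    tauto
  rw [this]
  refine (((measurableSet_badSet T φ).compl.inter (T.meas I hI)).inter
    (measurableSet_eq_Av T φ I)).inter
    (MeasurableSet.biInter (mem_countable T) fun J hJ => ?_)
  by_cases hJI : J ⊆ I
  · have : {x : X | x ∈ J → maxOp T φ x = Av μ J φ → J ⊆ I} = Set.univ := by
      ext x; simp [hJI]
    rw [this]; exact MeasurableSet.univ
  · have : {x : X | x ∈ J → maxOp T φ x = Av μ J φ → J ⊆ I} =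
        Jᶜ ∪ {x | maxOp T φ x ≠ Av μ J φ} := by
      ext x
      simp only [Set.mem_setOf_eq, Set.mem_union, Set.mem_compl_iff]
      constructor
      · intro h
        by_cases hx : x ∈ J
        · exact Or.inr fun he => hJI (h hx he)
        · exact Or.inl hx
      · intro h hx he
        rcases h with h' | h'
        · exact absurd hx h'
        · exact absurd he h'
    rw [this]
    exact (T.meas J hJ).compl.union (measurableSet_eq_Av T φ J).compl

end Aux

/-- Lemma 3.2 iii): for `φ` `𝒯`-good and `I ∈ S_φ`, `I` coincides up to a `μ`-null set
with `⋃ {A(φ,J) : J ∈ S_φ, J ⊆ I}`; in particular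
`μ(I) = Σ_{J ∈ S_φ, J ⊆ I} μ(A(φ,J))`. -/
theorem measure_eq_tsum_ASet (μ : Measure X) [IsProbabilityMeasure μ] [NullSingletonClass μ]
    (T : DyadicTree μ) (φ : X → ℝ≥0∞) (hφ : Measurable φ)
    (hint : ∫⁻ y, φ y ∂μ ≠ ∞) (hgood : TGood T φ)
    (I : Set X) (hI : I ∈ Sphi T φ) :
    μ (I \ ⋃ J ∈ {J ∈ Sphi T φ | J ⊆ I}, ASet T φ J) = 0 ∧
    μ ((⋃ J ∈ {J ∈ Sphi T φ | J ⊆ I}, ASet T φ J) \ I) = 0 ∧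
    μ I = ∑' J : {J ∈ Sphi T φ | J ⊆ I}, μ (ASet T φ J) := by
  classical
  set U : Set X := ⋃ J ∈ {J ∈ Sphi T φ | J ⊆ I}, ASet T φ J with hU
  have hUI : U ⊆ I := by
    refine Set.iUnion₂_subset fun J hJ => ?_
    exact (ASet_subset T φ J).trans hJ.2
  -- Part 1
  have part1 : μ (I \ U) = 0 := by
    have hsub : I \ U ⊆ badSet T φ ∪ ⋃ J ∈ {J ∈ T.mem | μ (ASet T φ J) = 0}, ASet T φ J := by
      rintro x ⟨hxI, hxU⟩
      by_cases hb : x ∈ badSet T φ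
      · exact Or.inl hb
      obtain ⟨J, hJmem, hxA⟩ := exists_ASet T φ hb
      by_cases h0 : μ (ASet T φ J) = 0
      · exact Or.inr (Set.mem_iUnion₂.mpr ⟨J, ⟨hJmem, h0⟩, hxA⟩)
      have hJS : J ∈ Sphi T φ := Or.inl ⟨hJmem, pos_iff_ne_zero.mpr h0⟩
      have hJI : J ⊆ I := by
        rcases hI with hI' | hI'
        · exact ASet_subset_of_inter T φ hI'.1 hJmem
            (nonempty_of_measure_ne_zero hI'.2.ne') hxA hxI
        · rw [Set.mem_singleton_iff.mp hI']; exact Set.subset_univ J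
      exact absurd (Set.mem_iUnion₂.mpr ⟨J, ⟨hJS, hJI⟩, hxA⟩) hxU
    refine measure_mono_null hsub (measure_union_null hgood ?_)
    refine (measure_biUnion_null_iff ((mem_countable T).mono (Set.sep_subset _ _))).mpr ?_
    exact fun J hJ => hJ.2
  refine ⟨part1, ?_, ?_⟩
  · rw [Set.diff_eq_empty.mpr hUI, measure_empty]
  · have hμIU : μ I = μ U := by
      refine le_antisymm ?_ (measure_mono hUI)
      calc μ I ≤ μ (U ∪ (I \ U)) := measure_mono fun x hx => by
                by_cases h : x ∈ U
                · exact Or.inl h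
                · exact Or.inr ⟨hx, h⟩
        _ ≤ μ U + μ (I \ U) := measure_union_le _ _
        _ = μ U := by rw [part1, add_zero]
    rw [hμIU, hU]
    refine measure_biUnion ?_ ?_ ?_
    · refine Set.Countable.mono (Set.sep_subset _ _) ?_
      exact ((mem_countable T).mono (Set.sep_subset _ _)).union (Set.countable_singleton _)
    · intro J hJ K hK hne
      simp only [Function.onFun, Set.disjoint_left]
      intro x hxJ hxK
      exact hne (ASet_eq T φ (mem_of_Sphi T φ hJ.1) (mem_of_Sphi T φ hK.1) hxJ hxK)
    · exact fun J hJ => measurableSet_ASet T φ (mem_of_Sphi T φ hJ.1)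
end
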